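/- If z_1,...,z_k are independent real-valued random variables such that P[|z_j| ≥ K] ≤ 2·exp(−K/σ_j) for all K ≥ 0 and each j, then P[|∑_{j=1}^k z_j| ≥ K] ≤ 2·exp(−K/(3·∑_{j=1}^k σ_j)) for all K ≥ 0. -/

import Mathlib

open MeasureTheory ProbabilityTheory Real Set

private lemma ratio_mul_le {a b : ℝ} (ha : 0 ≤ a) (hb : 0 ≤ b) (hab : a + b < 1) :
    (1 + a) / (1 - a) * ((1 + b) / (1 - b)) ≤ (1 + (a + b)) / (1 - (a + b)) := by
  have h1 : 0 < 1 - a := by linarith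
  have h2 : 0 < 1 - b := by linarith
  have h3 : 0 < 1 - (a + b) := by linarith
  rw [div_mul_div_comm, div_le_div_iff₀ (by positivity) h3]
  nlinarith [mul_nonneg (mul_nonneg ha hb) (add_nonneg ha hb)]

private lemma prod_ratio_le {ι : Type*} (s : Finset ι) (a : ι → ℝ) (ha : ∀ j, 0 ≤ a j)
    (hs : ∑ j ∈ s, a j < 1) :
    ∏ j ∈ s, (1 + a j) / (1 - a j) ≤ (1 + ∑ j ∈ s, a j) / (1 - ∑ j ∈ s, a j) := by
  classical
  induction s using Finset.induction_on with
  | empty => simp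
  | @insert i s hi ih =>
      rw [Finset.sum_insert hi] at hs ⊢
      rw [Finset.prod_insert hi]
      have hsum_nn : 0 ≤ ∑ j ∈ s, a j := Finset.sum_nonneg fun j _ => ha j
      have hslt : ∑ j ∈ s, a j < 1 := by have := ha i; linarith
      have hilt : a i < 1 := by linarith
      calc (1 + a i) / (1 - a i) * ∏ j ∈ s, (1 + a j) / (1 - a j)
          ≤ (1 + a i) / (1 - a i) * ((1 + ∑ j ∈ s, a j) / (1 - ∑ j ∈ s, a j)) := by
            apply mul_le_mul_of_nonneg_left (ih hslt)
            exact div_nonneg (by linarith [ha i]) (by linarith)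
        _ ≤ (1 + (a i + ∑ j ∈ s, a j)) / (1 - (a i + ∑ j ∈ s, a j)) :=
            ratio_mul_le (ha i) hsum_nn hs

private lemma mgf_lintegral_le {Ω : Type*} [MeasurableSpace Ω] (μ : Measure Ω)
    [IsProbabilityMeasure μ] (W : Ω → ℝ) (hW : Measurable W) (hWnn : ∀ ω, 0 ≤ W ω)
    {σ t : ℝ} (hσ : 0 < σ) (ht : 0 < t) (htσ : t * σ < 1)
    (htail : ∀ K : ℝ, 0 ≤ K → μ {ω | K ≤ W ω} ≤ ENNReal.ofReal (2 * Real.exp (-(K / σ)))) :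
    ∫⁻ ω, ENNReal.ofReal (Real.exp (t * W ω)) ∂μ ≤
      ENNReal.ofReal ((1 + t * σ) / (1 - t * σ)) := by
  set r : ℝ := 1 / σ - t with hr_def
  have hr : 0 < r := by
    have : t < 1 / σ := by rw [lt_div_iff₀ hσ]; linarith
    simpa [hr_def] using sub_pos.mpr this
  -- layer cake
  have hlayer : ∫⁻ ω, ENNReal.ofReal (∫ s in (0 : ℝ)..W ω, t * Real.exp (t * s)) ∂μ =
      ∫⁻ s in Ioi (0 : ℝ), μ {a | s ≤ W a} * ENNReal.ofReal (t * Real.exp (t * s)) := by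
    apply lintegral_comp_eq_lintegral_meas_le_mul μ (ae_of_all _ hWnn) hW.aemeasurable
    · intro s _
      exact (continuous_const.mul (Real.continuous_exp.comp (continuous_const.mul continuous_id))).intervalIntegrable _ _
    · exact ae_of_all _ fun s => by positivity
  have hint : ∀ w : ℝ, ∫ s in (0 : ℝ)..w, t * Real.exp (t * s) = Real.exp (t * w) - 1 := by
    intro w
    have hderiv : ∀ s ∈ uIcc (0 : ℝ) w,
        HasDerivAt (fun u => Real.exp (t * u)) (t * Real.exp (t * s)) s := by
      intro s _
      have h := ((hasDerivAt_id s).const_mul t).exp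
      simpa [mul_comm] using h
    have hii : IntervalIntegrable (fun s => t * Real.exp (t * s)) volume 0 w :=
      (continuous_const.mul (Real.continuous_exp.comp (continuous_const.mul continuous_id))).intervalIntegrable _ _
    rw [intervalIntegral.integral_eq_sub_of_hasDerivAt hderiv hii]
    simp
  -- split exp = (exp - 1) + 1
  have hsplit : ∀ ω, ENNReal.ofReal (Real.exp (t * W ω)) =
      ENNReal.ofReal (Real.exp (t * W ω) - 1) + 1 := by
    intro ω
    have h1 : (1 : ℝ) ≤ Real.exp (t * W ω) := by
      have := Real.add_one_le_exp (t * W ω)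
      have := mul_nonneg ht.le (hWnn ω)
      linarith
    rw [← ENNReal.ofReal_one, ← ENNReal.ofReal_add (by linarith) zero_le_one]
    norm_num
  have hmeas_exp : Measurable fun ω => ENNReal.ofReal (Real.exp (t * W ω) - 1) :=
    (((hW.const_mul t).exp.sub measurable_const)).ennreal_ofReal
  have hE : ∫⁻ ω, ENNReal.ofReal (Real.exp (t * W ω)) ∂μ =
      (∫⁻ s in Ioi (0 : ℝ), μ {a | s ≤ W a} * ENNReal.ofReal (t * Real.exp (t * s))) + 1 := by
    calc ∫⁻ ω, ENNReal.ofReal (Real.exp (t * W ω)) ∂μ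
        = ∫⁻ ω, (ENNReal.ofReal (Real.exp (t * W ω) - 1) + 1) ∂μ := by
          exact lintegral_congr fun ω => hsplit ω
      _ = (∫⁻ ω, ENNReal.ofReal (Real.exp (t * W ω) - 1) ∂μ) + 1 := by
          rw [lintegral_add_right _ measurable_const, lintegral_const, measure_univ, mul_one]
      _ = (∫⁻ s in Ioi (0 : ℝ), μ {a | s ≤ W a} * ENNReal.ofReal (t * Real.exp (t * s))) + 1 := by
          rw [← hlayer]
          exact congrArg (· + 1) (lintegral_congr fun ω => by rw [hint (W ω)])
  -- bound the tail integral
  have htail' : ∀ s : ℝ, μ {a | s ≤ W a} ≤ ENNReal.ofReal (2 * Real.exp (-(s / σ))) := by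
    intro s
    rcases le_or_gt 0 s with hs | hs
    · exact htail s hs
    · refine le_trans prob_le_one ?_
      rw [ENNReal.one_le_ofReal]
      have h1 : (1 : ℝ) ≤ Real.exp (-(s / σ)) := by
        apply Real.one_le_exp
        have : s / σ < 0 := div_neg_of_neg_of_pos hs hσ
        linarith
      linarith
  have hbound : (∫⁻ s in Ioi (0 : ℝ), μ {a | s ≤ W a} * ENNReal.ofReal (t * Real.exp (t * s))) ≤
      ∫⁻ s in Ioi (0 : ℝ), ENNReal.ofReal (2 * t * Real.exp (-(r * s))) := by
    apply lintegral_mono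
    intro s
    calc μ {a | s ≤ W a} * ENNReal.ofReal (t * Real.exp (t * s))
        ≤ ENNReal.ofReal (2 * Real.exp (-(s / σ))) * ENNReal.ofReal (t * Real.exp (t * s)) :=
          mul_le_mul_left (htail' s) _
      _ = ENNReal.ofReal (2 * t * Real.exp (-(r * s))) := by
          rw [← ENNReal.ofReal_mul (by positivity)]
          congr 1
          rw [show -(r * s) = -(s / σ) + t * s by rw [hr_def]; field_simp; ring,
            Real.exp_add]
          ring
  -- compute the exponential integral
  have hcalc : (∫⁻ s in Ioi (0 : ℝ), ENNReal.ofReal (2 * t * Real.exp (-(r * s)))) =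
      ENNReal.ofReal (2 * t / r) := by
    have hint_on : IntegrableOn (fun s : ℝ => 2 * t * Real.exp (-(r * s))) (Ioi 0) := by
      have := (exp_neg_integrableOn_Ioi 0 hr).const_mul (2 * t)
      simp only [neg_mul] at this; exact this
    rw [← ofReal_integral_eq_lintegral_ofReal hint_on (ae_of_all _ fun s => by positivity)]
    congr 1
    rw [MeasureTheory.integral_const_mul]
    have : (∫ s in Ioi (0 : ℝ), Real.exp (-(r * s))) = r⁻¹ := by
      have h := integral_comp_mul_left_Ioi (fun x => Real.exp (-x)) 0 hr
      simp only [mul_zero, integral_exp_neg_Ioi, neg_zero, Real.exp_zero, smul_eq_mul,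
        mul_one] at h
      exact h
    rw [this]
    field_simp
  calc ∫⁻ ω, ENNReal.ofReal (Real.exp (t * W ω)) ∂μ
      ≤ ENNReal.ofReal (2 * t / r) + 1 := by
        rw [hE]; exact add_le_add_left (hbound.trans hcalc.le) 1
    _ = ENNReal.ofReal ((1 + t * σ) / (1 - t * σ)) := by
        rw [← ENNReal.ofReal_one,
          ← ENNReal.ofReal_add (div_nonneg (by positivity) hr.le) zero_le_one]
        congr 1
        have h1 : (0 : ℝ) < 1 - t * σ := by linarith
        have key : 1 / σ - t = (1 - t * σ) / σ := by field_simp [mul_comm]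
        rw [hr_def, key, div_div_eq_mul_div, div_add' _ _ _ h1.ne']
        congr 1
        ring

theorem stmt_1
    {Ω : Type*} [MeasurableSpace Ω] (μ : Measure Ω) [IsProbabilityMeasure μ]
    (k : ℕ) (z : Fin k → Ω → ℝ) (σ : Fin k → ℝ)
    (hσ : ∀ j, 0 < σ j)
    (hmeas : ∀ j, Measurable (z j))
    (hindep : iIndepFun z μ)
    (htail : ∀ j, ∀ K : ℝ, 0 ≤ K →
      μ {ω | K ≤ |z j ω|} ≤ ENNReal.ofReal (2 * Real.exp (-(K / σ j)))) :
    ∀ K : ℝ, 0 ≤ K →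
      μ {ω | K ≤ |∑ j, z j ω|} ≤
        ENNReal.ofReal (2 * Real.exp (-(K / (3 * ∑ j, σ j)))) := by
  intro K hK
  by_cases hS : 0 < ∑ j, σ j
  swap
  · -- degenerate case: the sum of σ is 0, so k = 0
    have hS0 : (∑ j, σ j) = 0 :=
      le_antisymm (not_lt.mp hS) (Finset.sum_nonneg fun j _ => (hσ j).le)
    rw [hS0]
    simp only [mul_zero, div_zero, neg_zero, Real.exp_zero, mul_one]
    exact prob_le_one.trans (by rw [ENNReal.one_le_ofReal]; norm_num)
  set S : ℝ := ∑ j, σ j with hS_def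
  set t : ℝ := 1 / (3 * S) with ht_def
  have ht : 0 < t := by rw [ht_def]; exact div_pos one_pos (by linarith)
  -- the absolute values are independent
  set Y : Fin k → Ω → ℝ := fun j ω => |z j ω| with hY_def
  have hYmeas : ∀ j, Measurable (Y j) := fun j => (hmeas j).abs
  have hYnn : ∀ j ω, 0 ≤ Y j ω := fun j ω => abs_nonneg _
  have hYindep : iIndepFun Y μ :=
    hindep.comp (fun _ => (|·|)) fun _ => measurable_abs
  -- per-variable bounds
  have hja : ∀ j, t * σ j < 1 := by
    intro j
    have hle : σ j ≤ S := by
      rw [hS_def]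
      exact Finset.single_le_sum (fun i _ => (hσ i).le) (Finset.mem_univ j)
    rw [ht_def]
    rw [div_mul_eq_mul_div, one_mul, div_lt_one (by positivity)]
    linarith
  have hlint : ∀ j, ∫⁻ ω, ENNReal.ofReal (Real.exp (t * Y j ω)) ∂μ ≤
      ENNReal.ofReal ((1 + t * σ j) / (1 - t * σ j)) := fun j =>
    mgf_lintegral_le μ (Y j) (hYmeas j) (fun ω => hYnn j ω) (hσ j) ht (hja j) (htail j)
  have hInt : ∀ j, Integrable (fun ω => Real.exp (t * Y j ω)) μ := by
    intro j
    refine ⟨((hYmeas j).const_mul t).exp.aestronglyMeasurable, ?_⟩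
    rw [hasFiniteIntegral_iff_ofReal (ae_of_all _ fun ω => (Real.exp_pos _).le)]
    exact lt_of_le_of_lt (hlint j) ENNReal.ofReal_lt_top
  have hmgf_le : ∀ j, mgf (Y j) μ t ≤ (1 + t * σ j) / (1 - t * σ j) := by
    intro j
    have h1 : mgf (Y j) μ t =
        (∫⁻ ω, ENNReal.ofReal (Real.exp (t * Y j ω)) ∂μ).toReal := by
      rw [mgf, integral_eq_lintegral_of_nonneg_ae (ae_of_all _ fun ω => (Real.exp_pos _).le)
        ((hYmeas j).const_mul t).exp.aestronglyMeasurable]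
    rw [h1]
    have h2 : (0:ℝ) ≤ (1 + t * σ j) / (1 - t * σ j) := by
      have h3 := hja j
      have ht2 : 0 ≤ t * σ j := mul_nonneg ht.le (hσ j).le
      exact div_nonneg (by linarith) (by linarith)
    calc (∫⁻ ω, ENNReal.ofReal (Real.exp (t * Y j ω)) ∂μ).toReal
        ≤ (ENNReal.ofReal ((1 + t * σ j) / (1 - t * σ j))).toReal :=
          ENNReal.toReal_mono ENNReal.ofReal_ne_top (hlint j)
      _ = (1 + t * σ j) / (1 - t * σ j) := ENNReal.toReal_ofReal h2
  -- the product is at most 2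
  have hsum_a : (∑ j, t * σ j) = 1 / 3 := by
    have h3S : (0:ℝ) < 3 * S := by linarith
    rw [← Finset.mul_sum, ← hS_def, ht_def, div_mul_eq_mul_div, one_mul,
      div_eq_div_iff h3S.ne' (by norm_num : (3:ℝ) ≠ 0)]
    ring
  have hprod2 : ∏ j, mgf (Y j) μ t ≤ 2 := by
    calc (∏ j, mgf (Y j) μ t)
        ≤ ∏ j, (1 + t * σ j) / (1 - t * σ j) := by
          apply Finset.prod_le_prod (fun j _ => mgf_nonneg) (fun j _ => hmgf_le j)
      _ ≤ (1 + ∑ j, t * σ j) / (1 - ∑ j, t * σ j) := by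
          apply prod_ratio_le _ _ (fun j => mul_nonneg ht.le (hσ j).le)
          rw [hsum_a]; norm_num
      _ = 2 := by rw [hsum_a]; norm_num
  -- Chernoff bound
  have hIntSum : Integrable (fun ω => Real.exp (t * (∑ j, Y j) ω)) μ :=
    hYindep.integrable_exp_mul_sum hYmeas fun j _ => hInt j
  have hchern := measure_ge_le_exp_mul_mgf (X := ∑ j, Y j) (μ := μ) K ht.le hIntSum
  rw [hYindep.mgf_sum hYmeas] at hchern
  have hsub : {ω | K ≤ |∑ j, z j ω|} ⊆ {ω | K ≤ (∑ j, Y j) ω} := by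
    intro ω hω
    simp only [Set.mem_setOf_eq, Finset.sum_apply] at hω ⊢
    exact hω.trans (Finset.abs_sum_le_sum_abs _ _)
  have hmono : μ {ω | K ≤ |∑ j, z j ω|} ≤ μ {ω | K ≤ (∑ j, Y j) ω} := measure_mono hsub
  have hfinal : (μ {ω | K ≤ (∑ j, Y j) ω}).toReal ≤ 2 * Real.exp (-(K / (3 * S))) := by
    calc (μ {ω | K ≤ (∑ j, Y j) ω}).toReal
        ≤ Real.exp (-t * K) * ∏ j, mgf (Y j) μ t := hchern
      _ ≤ Real.exp (-t * K) * 2 :=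
          mul_le_mul_of_nonneg_left hprod2 (Real.exp_pos _).le
      _ = 2 * Real.exp (-(K / (3 * S))) := by
          rw [ht_def]
          rw [show -(1 / (3 * S)) * K = -(K / (3 * S)) by field_simp]
          ring
  calc μ {ω | K ≤ |∑ j, z j ω|}
      ≤ μ {ω | K ≤ (∑ j, Y j) ω} := hmono
    _ = ENNReal.ofReal ((μ {ω | K ≤ (∑ j, Y j) ω}).toReal) :=
        (ENNReal.ofReal_toReal (measure_ne_top μ _)).symm
    _ ≤ ENNReal.ofReal (2 * Real.exp (-(K / (3 * S)))) := ENNReal.ofReal_le_ofReal hfinal
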